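/- The GHZ state |φ₀⟩ = (|000⟩+|111⟩)/√2 satisfies the Mermin-type equality ⟨φ₀| X⊗X⊗X − X⊗Y⊗Y − Y⊗X⊗Y − Y⊗Y⊗X |φ₀⟩ = 4, and 4 is the maximal eigenvalue of the operator X⊗X⊗X − X⊗Y⊗Y − Y⊗X⊗Y − Y⊗Y⊗X. -/

import Mathlib

open Matrix Finset
open scoped ComplexOrder Kronecker

noncomputable section

abbrev Q3 := Fin 2 × Fin 2 × Fin 2

def inn {n : Type*} [Fintype n] (v w : n → ℂ) : ℂ := ∑ i, star (v i) * w i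

def PX : Matrix (Fin 2) (Fin 2) ℂ := !![0, 1; 1, 0]
def PY : Matrix (Fin 2) (Fin 2) ℂ := !![0, -Complex.I; Complex.I, 0]

/-- The GHZ state `(|000⟩+|111⟩)/√2`. -/
def ghz0 : Q3 → ℂ := fun x =>
  ((1 / Real.sqrt 2 : ℝ) : ℂ) *
    ((if x = ((0 : Fin 2), (0 : Fin 2), (0 : Fin 2)) then 1 else 0)
      + (if x = ((1 : Fin 2), (1 : Fin 2), (1 : Fin 2)) then 1 else 0))

/-- The Mermin operator `XXX − XYY − YXY − YYX`. -/
def mermin : Matrix Q3 Q3 ℂ :=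
  PX ⊗ₖ (PX ⊗ₖ PX) - PX ⊗ₖ (PY ⊗ₖ PY) - PY ⊗ₖ (PX ⊗ₖ PY) - PY ⊗ₖ (PY ⊗ₖ PX)

set_option maxHeartbeats 2000000 in
lemma mermin_eq' : mermin = Matrix.of fun i j =>
    if (i = ((0:Fin 2),(0:Fin 2),(0:Fin 2)) ∧ j = ((1:Fin 2),(1:Fin 2),(1:Fin 2)))
      ∨ (i = ((1:Fin 2),(1:Fin 2),(1:Fin 2)) ∧ j = ((0:Fin 2),(0:Fin 2),(0:Fin 2)))
    then (4:ℂ) else 0 := by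
  ext ⟨a,b,c⟩ ⟨d,e,f⟩
  fin_cases a <;> fin_cases b <;> fin_cases c <;> fin_cases d <;> fin_cases e <;> fin_cases f <;>
    · simp only [mermin, PX, PY, Matrix.of_apply, Matrix.sub_apply, kroneckerMap_apply]
      norm_num [Prod.ext_iff]

/-- Cholesky-type factor of `4·1 − mermin`. -/
def Bfac : Matrix Q3 Q3 ℂ := Matrix.of fun i j =>
  if i = j ∧ i ≠ ((1:Fin 2),(1:Fin 2),(1:Fin 2)) then 2
  else if i = ((0:Fin 2),(0:Fin 2),(0:Fin 2)) ∧ j = ((1:Fin 2),(1:Fin 2),(1:Fin 2)) then -2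
  else 0

set_option maxHeartbeats 2000000 in
lemma hBfac : Bfacᴴ * Bfac = (4 : ℂ) • (1 : Matrix Q3 Q3 ℂ) - mermin := by
  rw [mermin_eq']
  ext ⟨a,b,c⟩ ⟨d,e,f⟩
  fin_cases a <;> fin_cases b <;> fin_cases c <;> fin_cases d <;> fin_cases e <;> fin_cases f <;>
    · simp only [mul_apply, Fintype.sum_prod_type, Fin.sum_univ_two, Bfac,
        conjTranspose_apply, Matrix.of_apply, Matrix.sub_apply, Matrix.smul_apply, Matrix.one_apply,
        smul_eq_mul]
      norm_num [Prod.ext_iff]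

/-- The GHZ state achieves the value `4` of the Mermin operator, and `4` is its
maximal eigenvalue (i.e. the operator is bounded above by `4·1`). -/
theorem stmt_19 :
    inn ghz0 (mermin.mulVec ghz0) = 4 ∧
      ((4 : ℂ) • (1 : Matrix Q3 Q3 ℂ) - mermin).PosSemidef := by
  constructor
  · have h2 : (Real.sqrt 2 : ℂ) * (Real.sqrt 2 : ℂ) = 2 := by
      norm_cast
      exact Real.mul_self_sqrt (by norm_num)
    simp only [inn, mulVec, dotProduct, mermin, ghz0, PX, PY, Fintype.sum_prod_type,
      Fin.sum_univ_two, Matrix.sub_apply, kroneckerMap_apply, Matrix.cons_val', Matrix.cons_val_zero,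
      Matrix.cons_val_one, Matrix.head_cons, Matrix.empty_val', Matrix.cons_val_fin_one,
      Matrix.head_fin_const]
    norm_num
    field_simp
    ring_nf
    norm_cast
    rw [Real.sq_sqrt (by norm_num : (0:ℝ) ≤ 2)]
  · exact hBfac ▸ Matrix.posSemidef_conjTranspose_mul_self Bfac
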